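/- arXiv:2508.17228 — 2 statements merged into one kernel-verified Lean document; each statement's English description precedes it below -/
import Mathlib

section
/- Let λ ∈ ℝ. For all integers n, l ≥ 0 and all y ∈ ℝ, the degenerate Bell polynomials satisfy the Spivey-type relation: φ_{l+n,λ}(y) = Σ_{k=0}^{n} Σ_{m=0}^{l} C(l,m) {n \brace k}_λ (k − nλ)_{l−m,λ} y^k φ_{m,λ}(y). -/
open Finset

/-- The degenerate falling factorial `(x)_{n,λ} = ∏_{i=0}^{n-1} (x - iλ)`. -/
noncomputable def degFall (lam x : ℝ) (n : ℕ) : ℝ :=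
  ∏ i ∈ Finset.range n, (x - (i : ℝ) * lam)

/-- The degenerate Stirling numbers of the second kind
`{n \brace k}_λ = (1/k!) ∑_{j=0}^{k} (-1)^{k-j} C(k,j) (j)_{n,λ}`. -/
noncomputable def degStirling (lam : ℝ) (n k : ℕ) : ℝ :=
  (1 / (Nat.factorial k : ℝ)) * ∑ j ∈ Finset.range (k + 1),
    (-1 : ℝ) ^ (k - j) * (Nat.choose k j : ℝ) * degFall lam (j : ℝ) n

/-- The degenerate Bell polynomials `φ_{n,λ}(x) = ∑_{k=0}^{n} {n \brace k}_λ x^k`. -/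
noncomputable def degBell (lam : ℝ) (n : ℕ) (x : ℝ) : ℝ :=
  ∑ k ∈ Finset.range (n + 1), degStirling lam n k * x ^ k

lemma degFall_zero (lam x : ℝ) : degFall lam x 0 = 1 := by simp [degFall]

lemma degFall_succ (lam x : ℝ) (n : ℕ) :
    degFall lam x (n + 1) = degFall lam x n * (x - n * lam) :=
  Finset.prod_range_succ _ _

lemma degFall_add (lam x : ℝ) (a b : ℕ) :
    degFall lam x (a + b) = degFall lam x a * degFall lam (x - a * lam) b := by
  induction b with
  | zero => simp [degFall]
  | succ b ih =>
      rw [show a + (b + 1) = (a + b) + 1 from rfl, degFall_succ, ih, degFall_succ]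
      push_cast
      ring

lemma degFall_one_cast (p k : ℕ) : degFall 1 (p : ℝ) k = (p.descFactorial k : ℝ) := by
  induction k with
  | zero => simp [degFall]
  | succ k ih =>
    rw [degFall_succ, ih, Nat.descFactorial_succ]
    rcases le_or_gt k p with h | h
    · push_cast [Nat.cast_sub h]; ring
    · have h1 : p.descFactorial k = 0 := Nat.descFactorial_eq_zero_iff_lt.mpr h
      rw [h1]
      simp

lemma degFall_vandermonde (lam x y : ℝ) (n : ℕ) :
    degFall lam (x + y) n =
      ∑ m ∈ range (n + 1), (n.choose m : ℝ) * degFall lam x m * degFall lam y (n - m) := by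
  induction n with
  | zero => simp [degFall]
  | succ n ih =>
    have step : ∀ m ∈ range (n + 1),
        ((n.choose m : ℝ) * degFall lam x m * degFall lam y (n - m)) * (x + y - n * lam)
          = (n.choose m : ℝ) * degFall lam x (m + 1) * degFall lam y (n - m)
            + (n.choose m : ℝ) * degFall lam x m * degFall lam y (n + 1 - m) := by
      intro m hm
      rw [mem_range] at hm
      have hm' : m ≤ n := Nat.lt_succ_iff.mp hm
      have h1 : n + 1 - m = (n - m) + 1 := by omega
      rw [degFall_succ, h1, degFall_succ]
      have h2 : ((n - m : ℕ) : ℝ) = (n : ℝ) - m := Nat.cast_sub hm'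
      rw [h2]; ring
    rw [degFall_succ, ih, Finset.sum_mul, Finset.sum_congr rfl step,
      Finset.sum_add_distrib]
    rw [Finset.sum_range_succ'
      (fun m => ((n + 1).choose m : ℝ) * degFall lam x m * degFall lam y (n + 1 - m)) (n + 1)]
    have e1 : ∀ i ∈ range (n + 1),
        (((n + 1).choose (i + 1) : ℝ)) * degFall lam x (i + 1) * degFall lam y (n + 1 - (i + 1))
          = (n.choose i : ℝ) * degFall lam x (i + 1) * degFall lam y (n - i)
            + (n.choose (i + 1) : ℝ) * degFall lam x (i + 1) * degFall lam y (n - i) := by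
      intro i hi
      rw [Nat.succ_sub_succ, Nat.choose_succ_succ]
      push_cast
      ring
    rw [Finset.sum_congr rfl e1, Finset.sum_add_distrib]
    rw [add_assoc]
    congr 1
    -- remaining: Σ_{i∈range(n+1)} C(n,i+1) X_{i+1} Y_{n-i} + f 0 = Σ_{m∈range(n+1)} C(n,m) X_m Y_{n+1-m}
    rw [Finset.sum_range_succ'
      (fun m => ((n).choose m : ℝ) * degFall lam x m * degFall lam y (n + 1 - m)) n]
    simp only [Nat.succ_sub_succ, Nat.choose_zero_right, Nat.cast_one]
    rw [Finset.sum_range_succ]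
    simp [Nat.choose_succ_self]

lemma degStirling_zero (lam : ℝ) (n : ℕ) : degStirling lam n 0 = degFall lam 0 n := by
  simp [degStirling]

lemma degStirling_zero_zero (lam : ℝ) : degStirling lam 0 0 = 1 := by
  simp [degStirling, degFall]

lemma degStirling_succ_zero (lam : ℝ) (n : ℕ) :
    degStirling lam (n + 1) 0 = ((0 : ℝ) - n * lam) * degStirling lam n 0 := by
  rw [degStirling_zero, degStirling_zero, degFall_succ]; ring

lemma degStirling_succ_succ (lam : ℝ) (n k : ℕ) :
    degStirling lam (n + 1) (k + 1)
      = degStirling lam n k + (((k : ℝ) + 1) - n * lam) * degStirling lam n (k + 1) := by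
  have key : ∑ j ∈ range (k + 2), (-1 : ℝ) ^ (k + 1 - j) * ((k + 1).choose j : ℝ)
        * degFall lam (j : ℝ) (n + 1)
      = ((k : ℝ) + 1) * ∑ j ∈ range (k + 1),
          (-1 : ℝ) ^ (k - j) * (k.choose j : ℝ) * degFall lam (j : ℝ) n
        + (((k : ℝ) + 1) - n * lam) * ∑ j ∈ range (k + 2),
            (-1 : ℝ) ^ (k + 1 - j) * ((k + 1).choose j : ℝ) * degFall lam (j : ℝ) n := by
    have split : ∀ j ∈ range (k + 2),
        (-1 : ℝ) ^ (k + 1 - j) * ((k + 1).choose j : ℝ) * degFall lam (j : ℝ) (n + 1)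
          = (-1 : ℝ) ^ (k + 1 - j) * ((k + 1).choose j : ℝ) * ((j : ℝ) - ((k : ℝ) + 1))
              * degFall lam (j : ℝ) n
            + (((k : ℝ) + 1) - n * lam) *
              ((-1 : ℝ) ^ (k + 1 - j) * ((k + 1).choose j : ℝ) * degFall lam (j : ℝ) n) := by
      intro j hj
      rw [degFall_succ]
      ring
    rw [Finset.sum_congr rfl split, Finset.sum_add_distrib, ← Finset.mul_sum]
    congr 1
    -- first sum: peel last term, then termwise identity
    rw [Finset.sum_range_succ]
    have hz : (-1 : ℝ) ^ (k + 1 - (k + 1)) * ((k + 1).choose (k + 1) : ℝ)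
        * (((k : ℝ) + 1) - ((k : ℝ) + 1)) * degFall lam ((k + 1 : ℕ) : ℝ) n = 0 := by
      push_cast
      ring
    rw [show (((k + 1 : ℕ) : ℝ)) = (k : ℝ) + 1 by push_cast; ring] at hz ⊢
    rw [hz, add_zero, Finset.mul_sum]
    refine Finset.sum_congr rfl fun j hj => ?_
    rw [mem_range] at hj
    have hjk : j ≤ k := Nat.lt_succ_iff.mp hj
    have hpow : (-1 : ℝ) ^ (k + 1 - j) = -(-1 : ℝ) ^ (k - j) := by
      rw [show k + 1 - j = (k - j) + 1 by omega, pow_succ]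
      ring
    have hch : ((k + 1).choose j : ℝ) * (((k : ℝ) + 1) - j) = ((k : ℝ) + 1) * (k.choose j : ℝ) := by
      have h := Nat.choose_mul_succ_eq k j
      have h2 : ((k.choose j * (k + 1) : ℕ) : ℝ) = (((k + 1).choose j * (k + 1 - j) : ℕ) : ℝ) := by
        exact_mod_cast congrArg (Nat.cast : ℕ → ℝ) h
      push_cast [Nat.cast_sub (by omega : j ≤ k + 1)] at h2
      nlinarith [h2]
    rw [hpow]
    linear_combination ((-1 : ℝ) ^ (k - j) * degFall lam (j : ℝ) n) * hch
  unfold degStirling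
  rw [key]
  have hfac : ((k + 1).factorial : ℝ) = ((k : ℝ) + 1) * (k.factorial : ℝ) := by
    push_cast [Nat.factorial_succ]; ring
  rw [hfac]
  have h1 : (k.factorial : ℝ) ≠ 0 := Nat.cast_ne_zero.mpr k.factorial_ne_zero
  have h2 : ((k : ℝ) + 1) ≠ 0 := by positivity
  field_simp

lemma alt_sum_choose (i : ℕ) (hi : i ≠ 0) :
    ∑ q ∈ range (i + 1), (-1 : ℝ) ^ (i - q) * (i.choose q : ℝ) = 0 := by
  have h := Int.alternating_sum_range_choose (n := i)
  rw [if_neg hi] at h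
  have h2 : ∑ q ∈ range (i + 1), (-1 : ℝ) ^ q * (i.choose q : ℝ) = 0 := by
    exact_mod_cast h
  have h3 := Finset.sum_range_reflect (fun q => (-1 : ℝ) ^ q * (i.choose q : ℝ)) (i + 1)
  simp only [Nat.add_sub_cancel] at h3
  rw [← h2, ← h3]
  refine Finset.sum_congr rfl fun j hj => ?_
  rw [mem_range, Nat.lt_succ_iff] at hj
  rw [Nat.choose_symm hj]

lemma degStirling_eq_zero (lam : ℝ) (m i : ℕ) (h : m < i) : degStirling lam m i = 0 := by
  induction m generalizing i with
  | zero =>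
    unfold degStirling
    have : ∀ j ∈ range (i + 1), (-1 : ℝ) ^ (i - j) * (i.choose j : ℝ) * degFall lam (j : ℝ) 0
        = (-1 : ℝ) ^ (i - j) * (i.choose j : ℝ) := by
      intro j hj; rw [degFall_zero, mul_one]
    rw [Finset.sum_congr rfl this, alt_sum_choose i (by omega)]
    ring
  | succ m ih =>
    obtain ⟨i', rfl⟩ : ∃ i', i = i' + 1 := ⟨i - 1, by omega⟩
    rw [degStirling_succ_succ, ih i' (by omega), ih (i' + 1) (by omega)]
    ring

lemma degFall_eq_sum (lam x : ℝ) (n : ℕ) :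
    degFall lam x n = ∑ k ∈ range (n + 1), degStirling lam n k * degFall 1 x k := by
  induction n with
  | zero => simp [degStirling_zero_zero, degFall_zero]
  | succ n ih =>
    have step : ∀ k ∈ range (n + 1),
        (degStirling lam n k * degFall 1 x k) * (x - n * lam)
          = degStirling lam n k * degFall 1 x (k + 1)
            + ((k : ℝ) - n * lam) * (degStirling lam n k * degFall 1 x k) := by
      intro k hk
      rw [degFall_succ]
      ring
    rw [degFall_succ, ih, Finset.sum_mul, Finset.sum_congr rfl step, Finset.sum_add_distrib]
    rw [Finset.sum_range_succ'
      (fun k => degStirling lam (n + 1) k * degFall 1 x k) (n + 1)]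
    have e1 : ∀ i ∈ range (n + 1),
        degStirling lam (n + 1) (i + 1) * degFall 1 x (i + 1)
          = degStirling lam n i * degFall 1 x (i + 1)
            + (((i : ℝ) + 1) - n * lam) * degStirling lam n (i + 1) * degFall 1 x (i + 1) := by
      intro i hi
      rw [degStirling_succ_succ]
      ring
    rw [Finset.sum_congr rfl e1, Finset.sum_add_distrib, add_assoc]
    congr 1
    rw [degStirling_succ_zero]
    have e2 : ∀ i ∈ range (n + 1),
        (((i : ℝ) + 1) - n * lam) * degStirling lam n (i + 1) * degFall 1 x (i + 1)
          = (((i + 1 : ℕ) : ℝ) - n * lam) * (degStirling lam n (i + 1) * degFall 1 x (i + 1)) := by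
      intro i hi; push_cast; ring
    rw [Finset.sum_congr rfl e2]
    have e3 : ((0 : ℝ) - n * lam) * degStirling lam n 0 * degFall 1 x 0
        = (((0 : ℕ) : ℝ) - n * lam) * (degStirling lam n 0 * degFall 1 x 0) := by
      push_cast; ring
    rw [e3, ← Finset.sum_range_succ'
      (fun k => ((k : ℝ) - n * lam) * (degStirling lam n k * degFall 1 x k)) (n + 1),
      Finset.sum_range_succ
        (fun k => ((k : ℝ) - n * lam) * (degStirling lam n k * degFall 1 x k)) (n + 1),
      degStirling_eq_zero lam n (n + 1) (by omega)]
    simp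

lemma coeff_eq (j k q : ℕ) (h : k + q ≤ j) :
    (j.choose (k + q) : ℝ) * ((k + q).descFactorial k : ℝ) * (1 / (j.factorial : ℝ))
      = ((j - k).choose q : ℝ) * (1 / ((j - k).factorial : ℝ)) := by
  have h2 := Nat.choose_mul (n := j) (Nat.le_add_right k q)
  have h2' : j.choose (k + q) * (k + q).choose k = j.choose k * (j - k).choose q := by
    simpa using h2
  have h3 := Nat.choose_mul_factorial_mul_factorial (show k ≤ j by omega)
  have hn : j.choose (k + q) * (k + q).descFactorial k * (j - k).factorial
      = (j - k).choose q * j.factorial := by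
    rw [Nat.descFactorial_eq_factorial_mul_choose]
    calc j.choose (k + q) * (k.factorial * (k + q).choose k) * (j - k).factorial
        = (j.choose (k + q) * (k + q).choose k) * (k.factorial * (j - k).factorial) := by ring
      _ = (j.choose k * (j - k).choose q) * (k.factorial * (j - k).factorial) := by rw [h2']
      _ = (j - k).choose q * (j.choose k * k.factorial * (j - k).factorial) := by ring
      _ = (j - k).choose q * j.factorial := by rw [h3]
  have hj : (j.factorial : ℝ) ≠ 0 := Nat.cast_ne_zero.mpr j.factorial_ne_zero
  have hjk : ((j - k).factorial : ℝ) ≠ 0 := Nat.cast_ne_zero.mpr (j - k).factorial_ne_zero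
  field_simp
  rw [mul_comm (j.factorial : ℝ)]
  exact_mod_cast hn

lemma H_eq (lam : ℝ) (j k m : ℕ) :
    (1 / (j.factorial : ℝ)) * ∑ p ∈ range (j + 1),
        (-1 : ℝ) ^ (j - p) * (j.choose p : ℝ)
          * (degFall 1 (p : ℝ) k * degFall lam ((p : ℝ) - (k : ℝ)) m)
      = if k ≤ j then degStirling lam m (j - k) else 0 := by
  by_cases hkj : k ≤ j
  · rw [if_pos hkj]
    have hsplit : j + 1 = k + (j - k + 1) := by omega
    rw [hsplit, Finset.sum_range_add]
    have z1 : ∀ p ∈ range k,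
        (-1 : ℝ) ^ (j - p) * (j.choose p : ℝ)
          * (degFall 1 (p : ℝ) k * degFall lam ((p : ℝ) - (k : ℝ)) m) = 0 := by
      intro p hp
      rw [mem_range] at hp
      rw [degFall_one_cast, Nat.descFactorial_eq_zero_iff_lt.mpr hp]
      simp
    rw [Finset.sum_congr rfl z1, Finset.sum_const_zero, zero_add, Finset.mul_sum]
    have e1 : ∀ q ∈ range (j - k + 1),
        (1 / (j.factorial : ℝ)) * ((-1 : ℝ) ^ (j - (k + q)) * (j.choose (k + q) : ℝ)
          * (degFall 1 ((k + q : ℕ) : ℝ) k * degFall lam (((k + q : ℕ) : ℝ) - (k : ℝ)) m))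
        = (1 / ((j - k).factorial : ℝ)) * ((-1 : ℝ) ^ ((j - k) - q) * ((j - k).choose q : ℝ)
            * degFall lam ((q : ℕ) : ℝ) m) := by
      intro q hq
      rw [mem_range] at hq
      have hq' : k + q ≤ j := by omega
      have hc := coeff_eq j k q hq'
      have hx : ((k + q : ℕ) : ℝ) - (k : ℝ) = ((q : ℕ) : ℝ) := by push_cast; ring
      have hpow : j - (k + q) = (j - k) - q := by omega
      rw [degFall_one_cast, hx, hpow]
      calc (1 / (j.factorial : ℝ)) * ((-1 : ℝ) ^ ((j - k) - q) * (j.choose (k + q) : ℝ)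
            * (((k + q).descFactorial k : ℝ) * degFall lam ((q : ℕ) : ℝ) m))
          = ((j.choose (k + q) : ℝ) * ((k + q).descFactorial k : ℝ) * (1 / (j.factorial : ℝ)))
              * ((-1 : ℝ) ^ ((j - k) - q) * degFall lam ((q : ℕ) : ℝ) m) := by ring
        _ = (((j - k).choose q : ℝ) * (1 / ((j - k).factorial : ℝ)))
              * ((-1 : ℝ) ^ ((j - k) - q) * degFall lam ((q : ℕ) : ℝ) m) := by rw [hc]
        _ = (1 / ((j - k).factorial : ℝ)) * ((-1 : ℝ) ^ ((j - k) - q) * ((j - k).choose q : ℝ)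
              * degFall lam ((q : ℕ) : ℝ) m) := by ring
    rw [Finset.sum_congr rfl e1, ← Finset.mul_sum]
    rfl
  · rw [if_neg hkj]
    have z : ∀ p ∈ range (j + 1),
        (-1 : ℝ) ^ (j - p) * (j.choose p : ℝ)
          * (degFall 1 (p : ℝ) k * degFall lam ((p : ℝ) - (k : ℝ)) m) = 0 := by
      intro p hp
      rw [mem_range] at hp
      rw [degFall_one_cast, Nat.descFactorial_eq_zero_iff_lt.mpr (by omega)]
      simp
    rw [Finset.sum_congr rfl z, Finset.sum_const_zero, mul_zero]

lemma innerSum_aux (lam y : ℝ) (n l k m : ℕ) (hk : k ≤ n) (hm : m ≤ l) :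
    y ^ k * degBell lam m y
      = ∑ j ∈ range (l + n + 1), y ^ j * ((1 / (j.factorial : ℝ)) * ∑ p ∈ range (j + 1),
          (-1 : ℝ) ^ (j - p) * (j.choose p : ℝ)
            * (degFall 1 (p : ℝ) k * degFall lam ((p : ℝ) - (k : ℝ)) m)) := by
  have e : ∀ j ∈ range (l + n + 1),
      y ^ j * ((1 / (j.factorial : ℝ)) * ∑ p ∈ range (j + 1),
          (-1 : ℝ) ^ (j - p) * (j.choose p : ℝ)
            * (degFall 1 (p : ℝ) k * degFall lam ((p : ℝ) - (k : ℝ)) m))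
        = y ^ j * (if k ≤ j then degStirling lam m (j - k) else 0) := by
    intro j hj
    rw [H_eq]
  rw [Finset.sum_congr rfl e]
  have hsplit : l + n + 1 = k + (l + n + 1 - k) := by omega
  rw [hsplit, Finset.sum_range_add]
  have z1 : ∀ j ∈ range k, y ^ j * (if k ≤ j then degStirling lam m (j - k) else 0) = 0 := by
    intro j hj
    rw [mem_range] at hj
    rw [if_neg (by omega)]
    ring
  rw [Finset.sum_congr rfl z1, Finset.sum_const_zero, zero_add]
  have e2 : ∀ i ∈ range (l + n + 1 - k),
      y ^ (k + i) * (if k ≤ k + i then degStirling lam m (k + i - k) else 0)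
        = y ^ k * (degStirling lam m i * y ^ i) := by
    intro i hi
    rw [if_pos (Nat.le_add_right k i), Nat.add_sub_cancel_left]
    ring
  rw [Finset.sum_congr rfl e2, ← Finset.mul_sum]
  congr 1
  unfold degBell
  apply Finset.sum_subset
  · intro i hi
    rw [mem_range] at hi ⊢
    omega
  · intro i _ hi
    rw [mem_range] at hi
    rw [degStirling_eq_zero lam m i (by omega)]
    ring

lemma expand_pt (lam : ℝ) (n l p : ℕ) :
    degFall lam (p : ℝ) (l + n)
      = ∑ k ∈ range (n + 1), ∑ m ∈ range (l + 1),
          degStirling lam n k * degFall 1 (p : ℝ) k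
            * ((l.choose m : ℝ) * degFall lam ((p : ℝ) - (k : ℝ)) m
                * degFall lam ((k : ℝ) - (n : ℝ) * lam) (l - m)) := by
  rw [show l + n = n + l from Nat.add_comm l n, degFall_add,
    degFall_eq_sum lam (p : ℝ) n, Finset.sum_mul]
  refine Finset.sum_congr rfl fun k hk => ?_
  rw [show (p : ℝ) - (n : ℝ) * lam
      = ((p : ℝ) - (k : ℝ)) + ((k : ℝ) - (n : ℝ) * lam) by ring,
    degFall_vandermonde, Finset.mul_sum]

lemma stirling_sp (lam : ℝ) (n l j : ℕ) :
    degStirling lam (l + n) j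
      = ∑ k ∈ range (n + 1), ∑ m ∈ range (l + 1),
          (l.choose m : ℝ) * degStirling lam n k
            * degFall lam ((k : ℝ) - (n : ℝ) * lam) (l - m)
            * ((1 / (j.factorial : ℝ)) * ∑ p ∈ range (j + 1),
                (-1 : ℝ) ^ (j - p) * (j.choose p : ℝ)
                  * (degFall 1 (p : ℝ) k * degFall lam ((p : ℝ) - (k : ℝ)) m)) := by
  rw [show degStirling lam (l + n) j
      = (1 / (j.factorial : ℝ)) * ∑ p ∈ range (j + 1),
          (-1 : ℝ) ^ (j - p) * (j.choose p : ℝ) * degFall lam (p : ℝ) (l + n) from rfl]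
  have e1 : ∀ p ∈ range (j + 1),
      (-1 : ℝ) ^ (j - p) * (j.choose p : ℝ) * degFall lam (p : ℝ) (l + n)
        = ∑ k ∈ range (n + 1), ∑ m ∈ range (l + 1),
            (-1 : ℝ) ^ (j - p) * (j.choose p : ℝ)
              * (degStirling lam n k * degFall 1 (p : ℝ) k
                * ((l.choose m : ℝ) * degFall lam ((p : ℝ) - (k : ℝ)) m
                    * degFall lam ((k : ℝ) - (n : ℝ) * lam) (l - m))) := by
    intro p hp
    rw [expand_pt, Finset.mul_sum]
    exact Finset.sum_congr rfl fun k _ => by rw [Finset.mul_sum]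
  rw [Finset.sum_congr rfl e1, Finset.sum_comm]
  have e2 : ∀ k ∈ range (n + 1),
      (∑ p ∈ range (j + 1), ∑ m ∈ range (l + 1),
          (-1 : ℝ) ^ (j - p) * (j.choose p : ℝ)
            * (degStirling lam n k * degFall 1 (p : ℝ) k
              * ((l.choose m : ℝ) * degFall lam ((p : ℝ) - (k : ℝ)) m
                  * degFall lam ((k : ℝ) - (n : ℝ) * lam) (l - m))))
        = ∑ m ∈ range (l + 1), ∑ p ∈ range (j + 1),
            (-1 : ℝ) ^ (j - p) * (j.choose p : ℝ)
              * (degStirling lam n k * degFall 1 (p : ℝ) k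
                * ((l.choose m : ℝ) * degFall lam ((p : ℝ) - (k : ℝ)) m
                    * degFall lam ((k : ℝ) - (n : ℝ) * lam) (l - m))) :=
    fun k _ => Finset.sum_comm
  rw [Finset.sum_congr rfl e2, Finset.mul_sum]
  refine Finset.sum_congr rfl fun k hk => ?_
  rw [Finset.mul_sum]
  refine Finset.sum_congr rfl fun m hm => ?_
  rw [Finset.mul_sum, Finset.mul_sum, Finset.mul_sum]
  exact Finset.sum_congr rfl fun p hp => by ring

/-- Spivey-type relation for the degenerate Bell polynomials. -/
theorem spivey_degBell (lam : ℝ) (n l : ℕ) (y : ℝ) :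
    degBell lam (l + n) y =
      ∑ k ∈ Finset.range (n + 1), ∑ m ∈ Finset.range (l + 1),
        (Nat.choose l m : ℝ) * degStirling lam n k *
          degFall lam ((k : ℝ) - (n : ℝ) * lam) (l - m) * y ^ k * degBell lam m y := by
  rw [show degBell lam (l + n) y
      = ∑ j ∈ range (l + n + 1), degStirling lam (l + n) j * y ^ j from rfl]
  have e1 : ∀ j ∈ range (l + n + 1),
      degStirling lam (l + n) j * y ^ j
        = ∑ k ∈ range (n + 1), ∑ m ∈ range (l + 1),
            ((l.choose m : ℝ) * degStirling lam n k
              * degFall lam ((k : ℝ) - (n : ℝ) * lam) (l - m)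
              * ((1 / (j.factorial : ℝ)) * ∑ p ∈ range (j + 1),
                  (-1 : ℝ) ^ (j - p) * (j.choose p : ℝ)
                    * (degFall 1 (p : ℝ) k * degFall lam ((p : ℝ) - (k : ℝ)) m))) * y ^ j := by
    intro j hj
    rw [stirling_sp, Finset.sum_mul]
    exact Finset.sum_congr rfl fun k _ => by rw [Finset.sum_mul]
  rw [Finset.sum_congr rfl e1, Finset.sum_comm]
  refine Finset.sum_congr rfl fun k hk => ?_
  rw [Finset.sum_comm]
  refine Finset.sum_congr rfl fun m hm => ?_
  rw [mem_range] at hk hm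
  rw [show (l.choose m : ℝ) * degStirling lam n k
        * degFall lam ((k : ℝ) - (n : ℝ) * lam) (l - m) * y ^ k * degBell lam m y
      = ((l.choose m : ℝ) * degStirling lam n k
          * degFall lam ((k : ℝ) - (n : ℝ) * lam) (l - m)) * (y ^ k * degBell lam m y) by ring,
    innerSum_aux lam y n l k m (by omega) (by omega), Finset.mul_sum]
  exact Finset.sum_congr rfl fun j hj => by ring
end

section
/- For all integers n, l ≥ 0 and all y ∈ ℝ, the Bell polynomials satisfy the Gould–Quaintance extension of Spivey's relation: φ_{l+n}(y) = Σ_{k=0}^{n} Σ_{m=0}^{l} C(l,m) {n \brace k} k^{l−m} y^k φ_m(y). -/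
open Finset

/-- The Stirling numbers of the second kind
`{n \brace k} = (1/k!) ∑_{j=0}^{k} (-1)^{k-j} C(k,j) j^n`. -/
noncomputable def stirling2 (n k : ℕ) : ℝ :=
  (1 / (Nat.factorial k : ℝ)) * ∑ j ∈ Finset.range (k + 1),
    (-1 : ℝ) ^ (k - j) * (Nat.choose k j : ℝ) * (j : ℝ) ^ n

/-- The Bell polynomials `φ_n(x) = ∑_{k=0}^{n} {n \brace k} x^k`. -/
noncomputable def bellPoly (n : ℕ) (x : ℝ) : ℝ :=
  ∑ k ∈ Finset.range (n + 1), stirling2 n k * x ^ k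

lemma stirling2_zero_zero : stirling2 0 0 = 1 := by
  simp [stirling2]

lemma stirling2_succ_zero (n : ℕ) : stirling2 (n + 1) 0 = 0 := by
  simp [stirling2]

lemma bellPoly_zero (y : ℝ) : bellPoly 0 y = 1 := by
  simp [bellPoly, stirling2_zero_zero]

/-- Lemma C -/
lemma stirling2_succ_succ (n k : ℕ) :
    stirling2 (n + 1) (k + 1) = (1 / (Nat.factorial k : ℝ)) *
      ∑ i ∈ Finset.range (k + 1), (-1 : ℝ) ^ (k - i) * (Nat.choose k i : ℝ) * ((i : ℝ) + 1) ^ n := by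
  rw [stirling2, Finset.sum_range_succ']
  simp only [Nat.cast_zero, zero_pow (Nat.succ_ne_zero n), mul_zero, add_zero]
  rw [Finset.mul_sum, Finset.mul_sum]
  refine Finset.sum_congr rfl fun i hi => ?_
  have hle : i ≤ k := Nat.lt_succ_iff.mp (Finset.mem_range.mp hi)
  have hsub : k + 1 - (i + 1) = k - i := by omega
  have hch : ((k + 1).choose (i + 1) : ℝ) * ((i : ℝ) + 1) = (k + 1 : ℝ) * (k.choose i : ℝ) := by
    have := Nat.add_one_mul_choose_eq k i
    have : ((k + 1) * k.choose i : ℕ) = ((k+1).choose (i+1) * (i+1) : ℕ) := this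
    exact_mod_cast (congrArg (fun x : ℕ => (x : ℝ)) this).symm
  have hfac : (Nat.factorial (k+1) : ℝ) = (k+1 : ℝ) * (Nat.factorial k : ℝ) := by
    push_cast [Nat.factorial_succ]; ring
  have hfk : (Nat.factorial k : ℝ) ≠ 0 := Nat.cast_ne_zero.mpr (Nat.factorial_ne_zero k)
  have hk1 : ((k:ℝ) + 1) ≠ 0 := by positivity
  rw [hsub]
  have hpow : ((i:ℝ) + 1) ^ (n + 1) = ((i:ℝ) + 1) * ((i:ℝ) + 1) ^ n := by ring
  push_cast
  rw [hpow, hfac]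
  field_simp
  linear_combination hch

/-- key sum identity for the recurrence -/
lemma key_sum (n k : ℕ) :
    ∑ j ∈ Finset.range (k+2), (-1:ℝ)^(k+1-j) * ((k+1).choose j : ℝ) * (j:ℝ)^n
      + ∑ j ∈ Finset.range (k+1), (-1:ℝ)^(k-j) * (k.choose j : ℝ) * (j:ℝ)^n
    = ∑ i ∈ Finset.range (k+1), (-1:ℝ)^(k-i) * (k.choose i : ℝ) * ((i:ℝ)+1)^n := by
  rw [Finset.sum_range_succ' (fun j => (-1:ℝ)^(k+1-j) * ((k+1).choose j : ℝ) * (j:ℝ)^n) (k+1),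
      Finset.sum_range_succ' (fun j => (-1:ℝ)^(k-j) * (k.choose j : ℝ) * (j:ℝ)^n) k]
  have hext : ∑ i ∈ Finset.range (k+1), (-1:ℝ)^(k-(i+1)) * (k.choose (i+1) : ℝ) * ((i+1:ℕ):ℝ)^n
      = ∑ i ∈ Finset.range k, (-1:ℝ)^(k-(i+1)) * (k.choose (i+1) : ℝ) * ((i+1:ℕ):ℝ)^n := by
    rw [Finset.sum_range_succ]
    simp [Nat.choose_succ_self]
  have h0 : ((-1:ℝ)^(k+1-0) * ((k+1).choose 0 : ℝ) * ((0:ℕ):ℝ)^n)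
      + ((-1:ℝ)^(k-0) * (k.choose 0 : ℝ) * ((0:ℕ):ℝ)^n) = 0 := by
    simp [pow_succ]
  simp only [Nat.sub_zero] at h0 ⊢
  rw [← hext]
  have hcomb : ∑ i ∈ Finset.range (k+1), (-1:ℝ)^(k+1-(i+1)) * ((k+1).choose (i+1) : ℝ) * ((i+1:ℕ):ℝ)^n
      + ∑ i ∈ Finset.range (k+1), (-1:ℝ)^(k-(i+1)) * (k.choose (i+1) : ℝ) * ((i+1:ℕ):ℝ)^n
      = ∑ i ∈ Finset.range (k+1), (-1:ℝ)^(k-i) * (k.choose i : ℝ) * ((i:ℝ)+1)^n := by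
    rw [← Finset.sum_add_distrib]
    refine Finset.sum_congr rfl fun i hi => ?_
    have hle : i ≤ k := Nat.lt_succ_iff.mp (Finset.mem_range.mp hi)
    have hsub : k + 1 - (i + 1) = k - i := by omega
    have hsign : (-1:ℝ)^(k-(i+1)) * (k.choose (i+1) : ℝ)
        = -((-1:ℝ)^(k-i)) * (k.choose (i+1) : ℝ) := by
      rcases eq_or_lt_of_le hle with rfl | hlt
      · simp [Nat.choose_succ_self]
      · have h2 : k - i = (k - (i+1)) + 1 := by omega
        rw [h2, pow_succ]; ring
    have hP : (((k+1).choose (i+1) : ℕ) : ℝ) = (k.choose i : ℝ) + (k.choose (i+1) : ℝ) := by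
      rw [Nat.choose_succ_succ]; push_cast; ring
    rw [hsub, hP]
    push_cast
    linear_combination ((i:ℝ)+1)^n * hsign
  linarith [hcomb, h0]

/-- Stirling recurrence -/
lemma stirling2_rec (n k : ℕ) :
    stirling2 (n+1) (k+1) = ((k:ℝ)+1) * stirling2 n (k+1) + stirling2 n k := by
  rw [stirling2_succ_succ, stirling2, stirling2]
  have hfk : (Nat.factorial k : ℝ) ≠ 0 := Nat.cast_ne_zero.mpr (Nat.factorial_ne_zero k)
  have hfac : (Nat.factorial (k+1) : ℝ) = ((k:ℝ)+1) * (Nat.factorial k : ℝ) := by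
    push_cast [Nat.factorial_succ]; ring
  have hk1 : ((k:ℝ)+1) ≠ 0 := by positivity
  have := key_sum n k
  rw [← this]
  rw [hfac]
  field_simp

/-- vanishing above the diagonal -/
lemma stirling2_eq_zero : ∀ (n : ℕ) {k : ℕ}, n < k → stirling2 n k = 0 := by
  intro n
  induction n with
  | zero =>
    intro k hk
    obtain ⟨k, rfl⟩ : ∃ m, k = m + 1 := ⟨k-1, by omega⟩
    rw [stirling2]
    have h1 : ∑ j ∈ Finset.range (k+2), (-1:ℝ)^(k+1-j) * ((k+1).choose j : ℝ) * (j:ℝ)^0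
        = ∑ j ∈ Finset.range (k+2), (-1:ℝ)^(k+1-j) * ((k+1).choose (k+1-j) : ℝ) := by
      refine Finset.sum_congr rfl fun j hj => ?_
      have hle : j ≤ k+1 := Nat.lt_succ_iff.mp (Finset.mem_range.mp hj)
      rw [pow_zero, mul_one, Nat.choose_symm hle]
    have h2 : ∑ j ∈ Finset.range (k+2), (-1:ℝ)^(k+1-j) * ((k+1).choose (k+1-j) : ℝ)
        = ∑ j ∈ Finset.range (k+2), (-1:ℝ)^j * ((k+1).choose j : ℝ) := by
      have := Finset.sum_range_reflect (fun j => (-1:ℝ)^j * ((k+1).choose j : ℝ)) (k+2)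
      simpa using this
    have h3 : ∑ j ∈ Finset.range (k+2), (-1:ℝ)^j * ((k+1).choose j : ℝ) = 0 := by
      have hz := Int.alternating_sum_range_choose_of_ne (show k+1 ≠ 0 by omega)
      have := congrArg (fun z : ℤ => (z : ℝ)) hz
      push_cast at this
      simpa using this
    rw [h1, h2, h3, mul_zero]
  | succ n ih =>
    intro k hk
    obtain ⟨k, rfl⟩ : ∃ m, k = m + 1 := ⟨k-1, by omega⟩
    rw [stirling2_rec, ih (by omega), ih (by omega)]
    ring

/-- Lemma D: `S(m+1,k+1) = ∑_j C(m,j) S(j,k)` -/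
lemma stirling2_binom (m k : ℕ) :
    ∑ j ∈ Finset.range (m+1), (m.choose j : ℝ) * stirling2 j k = stirling2 (m+1) (k+1) := by
  rw [stirling2_succ_succ]
  simp only [stirling2, Finset.mul_sum]
  rw [Finset.sum_comm]
  refine Finset.sum_congr rfl fun i hi => ?_
  have hbin : ∑ j ∈ Finset.range (m+1), (m.choose j : ℝ) * (i:ℝ)^j = ((i:ℝ)+1)^m := by
    rw [add_pow]
    refine Finset.sum_congr rfl fun j _ => ?_
    ring
  calc ∑ j ∈ Finset.range (m+1),
        (m.choose j : ℝ) * (1 / (Nat.factorial k : ℝ) * ((-1:ℝ)^(k-i) * (k.choose i : ℝ) * (i:ℝ)^j))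
      = (1 / (Nat.factorial k : ℝ) * ((-1:ℝ)^(k-i) * (k.choose i : ℝ)))
          * ∑ j ∈ Finset.range (m+1), (m.choose j : ℝ) * (i:ℝ)^j := by
        rw [Finset.mul_sum]
        refine Finset.sum_congr rfl fun j _ => by ring
    _ = 1 / (Nat.factorial k : ℝ) * ((-1:ℝ)^(k-i) * (k.choose i : ℝ) * ((i:ℝ)+1)^m) := by
        rw [hbin]; ring

/-- Bell recurrence -/
lemma bellPoly_rec (m : ℕ) (y : ℝ) :
    bellPoly (m+1) y = y * ∑ j ∈ Finset.range (m+1), (m.choose j : ℝ) * bellPoly j y := by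
  have hext : ∀ j ∈ Finset.range (m+1),
      (m.choose j : ℝ) * bellPoly j y
        = ∑ k ∈ Finset.range (m+1), (m.choose j : ℝ) * (stirling2 j k * y^k) := by
    intro j hj
    have hle : j ≤ m := Nat.lt_succ_iff.mp (Finset.mem_range.mp hj)
    rw [bellPoly, Finset.mul_sum]
    refine Finset.sum_subset (Finset.range_subset_range.mpr (show j+1 ≤ m+1 by omega)) ?_
    intro k hk hk2
    have : j < k := by
      simp only [Finset.mem_range] at hk hk2; omega
    rw [stirling2_eq_zero j this]
    ring
  rw [Finset.sum_congr rfl hext, Finset.sum_comm]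
  have h2 : ∀ k ∈ Finset.range (m+1),
      ∑ j ∈ Finset.range (m+1), (m.choose j : ℝ) * (stirling2 j k * y^k)
        = stirling2 (m+1) (k+1) * y^k := by
    intro k _
    rw [← stirling2_binom m k, Finset.sum_mul]
    refine Finset.sum_congr rfl fun j _ => by ring
  rw [Finset.sum_congr rfl h2]
  rw [bellPoly, Finset.sum_range_succ' _ (m+1)]
  simp only [stirling2_succ_zero, zero_mul, add_zero]
  rw [Finset.mul_sum]
  refine Finset.sum_congr rfl fun k _ => by ring

/-- inner Vandermonde-type sum -/
lemma choose_pow_sum_aux (l j : ℕ) (hj : j ≤ l) (x : ℝ) :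
    ∑ m ∈ Finset.range (l+1), (l.choose m : ℝ) * (m.choose j : ℝ) * x^(l-m)
      = (l.choose j : ℝ) * (x+1)^(l-j) := by
  have hsplit : Finset.range (l+1) = Finset.Ico 0 (l+1) := by
    rw [Finset.range_eq_Ico]
  rw [hsplit, ← Finset.sum_Ico_consecutive _ (Nat.zero_le j) (by omega : j ≤ l+1)]
  have hzero : ∑ m ∈ Finset.Ico 0 j, (l.choose m : ℝ) * (m.choose j : ℝ) * x^(l-m) = 0 := by
    refine Finset.sum_eq_zero fun m hm => ?_
    have : m < j := (Finset.mem_Ico.mp hm).2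
    rw [Nat.choose_eq_zero_of_lt this]
    simp
  rw [hzero, zero_add, Finset.sum_Ico_eq_sum_range]
  have hlen : l + 1 - j = (l - j) + 1 := by omega
  rw [hlen]
  have hstep : ∀ i ∈ Finset.range ((l-j)+1),
      (l.choose (j+i) : ℝ) * ((j+i).choose j : ℝ) * x^(l-(j+i))
        = (l.choose j : ℝ) * (((l-j).choose i : ℝ) * x^((l-j)-i)) := by
    intro i hi
    have hi' : i ≤ l - j := Nat.lt_succ_iff.mp (Finset.mem_range.mp hi)
    have h1 : l.choose (j+i) * (j+i).choose j = l.choose j * (l-j).choose i := by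
      have := Nat.choose_mul (n := l) (show j ≤ j+i by omega)
      simpa [Nat.add_sub_cancel_left] using this
    have h2 : l - (j+i) = (l-j) - i := by omega
    have h1' : (l.choose (j+i) : ℝ) * ((j+i).choose j : ℝ) = (l.choose j : ℝ) * ((l-j).choose i : ℝ) := by
      exact_mod_cast congrArg (fun z : ℕ => (z:ℝ)) h1
    rw [h2]
    linear_combination x ^ (l - j - i) * h1'
  rw [Finset.sum_congr rfl hstep, ← Finset.mul_sum]
  congr 1
  have := add_pow (1:ℝ) x (l-j)
  rw [add_comm (1:ℝ) x] at this
  rw [this]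
  refine Finset.sum_congr rfl fun i _ => by ring

/-- Lemma E -/
lemma lemE (l k : ℕ) (y : ℝ) :
    y * ∑ m ∈ Finset.range (l+1), (l.choose m : ℝ) * ((k:ℝ)+1)^(l-m) * bellPoly m y
      = ∑ m ∈ Finset.range (l+1), (l.choose m : ℝ) * (k:ℝ)^(l-m) * bellPoly (m+1) y := by
  have hstep : ∀ m ∈ Finset.range (l+1),
      (l.choose m : ℝ) * (k:ℝ)^(l-m) * bellPoly (m+1) y
        = ∑ j ∈ Finset.range (l+1),
            (l.choose m : ℝ) * (m.choose j : ℝ) * (k:ℝ)^(l-m) * (y * bellPoly j y) := by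
    intro m hm
    have hle : m ≤ l := Nat.lt_succ_iff.mp (Finset.mem_range.mp hm)
    rw [bellPoly_rec, Finset.mul_sum, Finset.mul_sum]
    have hsub : ∑ j ∈ Finset.range (m+1), (l.choose m : ℝ) * (k:ℝ)^(l-m) * (y * ((m.choose j : ℝ) * bellPoly j y))
        = ∑ j ∈ Finset.range (l+1), (l.choose m : ℝ) * (k:ℝ)^(l-m) * (y * ((m.choose j : ℝ) * bellPoly j y)) := by
      refine Finset.sum_subset (Finset.range_subset_range.mpr (by omega)) ?_
      intro j hj hj2
      have : m < j := by simp only [Finset.mem_range] at hj hj2; omega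
      rw [Nat.choose_eq_zero_of_lt this]
      simp
    rw [hsub]
    refine Finset.sum_congr rfl fun j _ => by ring
  rw [Finset.sum_congr rfl hstep, Finset.sum_comm]
  rw [Finset.mul_sum]
  refine Finset.sum_congr rfl fun j hj => ?_
  have hjle : j ≤ l := Nat.lt_succ_iff.mp (Finset.mem_range.mp hj)
  symm
  calc ∑ m ∈ Finset.range (l+1), (l.choose m : ℝ) * (m.choose j : ℝ) * (k:ℝ)^(l-m) * (y * bellPoly j y)
      = (∑ m ∈ Finset.range (l+1), (l.choose m : ℝ) * (m.choose j : ℝ) * (k:ℝ)^(l-m)) * (y * bellPoly j y) := by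
        rw [Finset.sum_mul]
    _ = (l.choose j : ℝ) * ((k:ℝ)+1)^(l-j) * (y * bellPoly j y) := by
        rw [choose_pow_sum_aux l j hjle]
    _ = y * ((l.choose j : ℝ) * ((k:ℝ)+1)^(l-j) * bellPoly j y) := by ring

lemma pascal_split (l : ℕ) (c y : ℝ) :
    ∑ m ∈ Finset.range (l+2), ((l+1).choose m : ℝ) * c^(l+1-m) * bellPoly m y
      = ∑ m ∈ Finset.range (l+2), (l.choose m : ℝ) * c^(l+1-m) * bellPoly m y
        + ∑ m ∈ Finset.range (l+1), (l.choose m : ℝ) * c^(l-m) * bellPoly (m+1) y := by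
  rw [Finset.sum_range_succ' (fun m => ((l+1).choose m : ℝ) * c^(l+1-m) * bellPoly m y) (l+1),
      Finset.sum_range_succ' (fun m => (l.choose m : ℝ) * c^(l+1-m) * bellPoly m y) (l+1)]
  have hterm : ∀ m ∈ Finset.range (l+1),
      ((l+1).choose (m+1) : ℝ) * c^(l+1-(m+1)) * bellPoly (m+1) y
        = (l.choose (m+1) : ℝ) * c^(l+1-(m+1)) * bellPoly (m+1) y
          + (l.choose m : ℝ) * c^(l-m) * bellPoly (m+1) y := by
    intro m hm
    have h1 : l + 1 - (m+1) = l - m := by omega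
    have h2 : ((l+1).choose (m+1) : ℝ) = (l.choose m : ℝ) + (l.choose (m+1) : ℝ) := by
      rw [Nat.choose_succ_succ]; push_cast; ring
    rw [h1, h2]; ring
  rw [Finset.sum_congr rfl hterm, Finset.sum_add_distrib]
  simp only [Nat.choose_zero_right, Nat.cast_one, Nat.sub_zero]
  ring

lemma shift_sum (N : ℕ) (G : ℕ → ℝ) (h0 : G 0 = 0) (htop : G (N+1) = 0) :
    ∑ k ∈ Finset.range (N+1), G (k+1) = ∑ k ∈ Finset.range (N+1), G k := by
  have h := Finset.sum_range_succ' G (N+1)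
  rw [Finset.sum_range_succ G (N+1), h0, htop, add_zero, add_zero] at h
  linarith

/-- The Gould–Quaintance extension of Spivey's relation to the Bell polynomials. -/
theorem spivey_gould_quaintance (n l : ℕ) (y : ℝ) :
    bellPoly (l + n) y =
      ∑ k ∈ Finset.range (n + 1), ∑ m ∈ Finset.range (l + 1),
        (Nat.choose l m : ℝ) * stirling2 n k * (k : ℝ) ^ (l - m) * y ^ k * bellPoly m y := by
  induction l generalizing n with
  | zero =>
    rw [Nat.zero_add, bellPoly]
    refine Finset.sum_congr rfl fun k _ => ?_
    rw [Finset.sum_range_one]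
    simp [bellPoly_zero]
  | succ l ih =>
    have h1 : l + 1 + n = l + (n + 1) := by omega
    rw [h1, ih (n+1)]
    have hPQ : ∀ k ∈ Finset.range (n+1),
        ∑ m ∈ Finset.range (l+1),
            (l.choose m : ℝ) * stirling2 (n+1) (k+1) * ((k+1:ℕ):ℝ)^(l-m) * y^(k+1) * bellPoly m y
          = (∑ m ∈ Finset.range (l+1),
              (l.choose m : ℝ) * stirling2 n (k+1) * ((k+1:ℕ):ℝ)^(l+1-m) * y^(k+1) * bellPoly m y)
            + stirling2 n k * y^k *
              ∑ m ∈ Finset.range (l+1), (l.choose m : ℝ) * (k:ℝ)^(l-m) * bellPoly (m+1) y := by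
      intro k _
      have h2 : stirling2 n k * y ^ k *
          ∑ m ∈ Finset.range (l+1), (l.choose m : ℝ) * (k:ℝ)^(l-m) * bellPoly (m+1) y
        = ∑ m ∈ Finset.range (l+1),
            stirling2 n k * (y ^ k * (y * ((l.choose m : ℝ) * ((k:ℝ)+1)^(l-m) * bellPoly m y))) := by
        rw [← lemE l k y, Finset.mul_sum, Finset.mul_sum]
        exact Finset.sum_congr rfl fun m _ => by ring
      rw [h2, ← Finset.sum_add_distrib]
      refine Finset.sum_congr rfl fun m hm => ?_
      have hle : m ≤ l := Nat.lt_succ_iff.mp (Finset.mem_range.mp hm)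
      have he : l + 1 - m = (l - m) + 1 := by omega
      rw [stirling2_rec, he, pow_succ]
      push_cast
      ring
    have hA : ∑ k ∈ Finset.range (n+1), ∑ m ∈ Finset.range (l+1),
          (l.choose m : ℝ) * stirling2 n (k+1) * ((k+1:ℕ):ℝ)^(l+1-m) * y^(k+1) * bellPoly m y
        = ∑ k ∈ Finset.range (n+1), ∑ m ∈ Finset.range (l+1),
          (l.choose m : ℝ) * stirling2 n k * (k:ℝ)^(l+1-m) * y^k * bellPoly m y := by
      refine shift_sum n (fun k => ∑ m ∈ Finset.range (l+1),
          (l.choose m : ℝ) * stirling2 n k * (k:ℝ)^(l+1-m) * y^k * bellPoly m y) ?_ ?_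
      · refine Finset.sum_eq_zero fun m hm => ?_
        have hle : m ≤ l := Nat.lt_succ_iff.mp (Finset.mem_range.mp hm)
        rw [Nat.cast_zero, zero_pow (show l+1-m ≠ 0 by omega)]
        ring
      · refine Finset.sum_eq_zero fun m hm => ?_
        rw [stirling2_eq_zero n (by omega)]
        ring
    have hR : ∀ k ∈ Finset.range (n+1),
        ∑ m ∈ Finset.range (l+1+1), ((l+1).choose m : ℝ) * stirling2 n k * (k:ℝ)^(l+1-m) * y^k * bellPoly m y
          = (∑ m ∈ Finset.range (l+1), (l.choose m : ℝ) * stirling2 n k * (k:ℝ)^(l+1-m) * y^k * bellPoly m y)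
            + stirling2 n k * y^k *
              ∑ m ∈ Finset.range (l+1), (l.choose m : ℝ) * (k:ℝ)^(l-m) * bellPoly (m+1) y := by
      intro k _
      have hfac1 : ∑ m ∈ Finset.range (l+2), ((l+1).choose m : ℝ) * stirling2 n k * (k:ℝ)^(l+1-m) * y^k * bellPoly m y
          = stirling2 n k * y^k * ∑ m ∈ Finset.range (l+2), ((l+1).choose m : ℝ) * (k:ℝ)^(l+1-m) * bellPoly m y := by
        rw [Finset.mul_sum]; exact Finset.sum_congr rfl fun m _ => by ring
      rw [hfac1, pascal_split l (k:ℝ) y]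
      rw [Finset.sum_range_succ (fun m => (l.choose m : ℝ) * (k:ℝ)^(l+1-m) * bellPoly m y) (l+1)]
      simp only [Nat.choose_succ_self, Nat.cast_zero, zero_mul, add_zero]
      rw [mul_add]
      congr 1
      rw [Finset.mul_sum]
      exact Finset.sum_congr rfl fun m _ => by ring
    calc ∑ k ∈ Finset.range (n+1+1), ∑ m ∈ Finset.range (l+1),
            (l.choose m : ℝ) * stirling2 (n+1) k * (k:ℝ)^(l-m) * y^k * bellPoly m y
        = (∑ k ∈ Finset.range (n+1), ∑ m ∈ Finset.range (l+1),
            (l.choose m : ℝ) * stirling2 (n+1) (k+1) * ((k+1:ℕ):ℝ)^(l-m) * y^(k+1) * bellPoly m y)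
          + ∑ m ∈ Finset.range (l+1),
            (l.choose m : ℝ) * stirling2 (n+1) 0 * ((0:ℕ):ℝ)^(l-m) * y^0 * bellPoly m y := by
          exact Finset.sum_range_succ' _ (n+1)
      _ = ∑ k ∈ Finset.range (n+1), ∑ m ∈ Finset.range (l+1),
            (l.choose m : ℝ) * stirling2 (n+1) (k+1) * ((k+1:ℕ):ℝ)^(l-m) * y^(k+1) * bellPoly m y := by
          simp [stirling2_succ_zero]
      _ = ∑ k ∈ Finset.range (n+1),
            ((∑ m ∈ Finset.range (l+1),
              (l.choose m : ℝ) * stirling2 n (k+1) * ((k+1:ℕ):ℝ)^(l+1-m) * y^(k+1) * bellPoly m y)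
            + stirling2 n k * y^k *
              ∑ m ∈ Finset.range (l+1), (l.choose m : ℝ) * (k:ℝ)^(l-m) * bellPoly (m+1) y) := by
          exact Finset.sum_congr rfl hPQ
      _ = (∑ k ∈ Finset.range (n+1), ∑ m ∈ Finset.range (l+1),
              (l.choose m : ℝ) * stirling2 n (k+1) * ((k+1:ℕ):ℝ)^(l+1-m) * y^(k+1) * bellPoly m y)
          + ∑ k ∈ Finset.range (n+1), stirling2 n k * y^k *
              ∑ m ∈ Finset.range (l+1), (l.choose m : ℝ) * (k:ℝ)^(l-m) * bellPoly (m+1) y := by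
          rw [Finset.sum_add_distrib]
      _ = (∑ k ∈ Finset.range (n+1), ∑ m ∈ Finset.range (l+1),
              (l.choose m : ℝ) * stirling2 n k * (k:ℝ)^(l+1-m) * y^k * bellPoly m y)
          + ∑ k ∈ Finset.range (n+1), stirling2 n k * y^k *
              ∑ m ∈ Finset.range (l+1), (l.choose m : ℝ) * (k:ℝ)^(l-m) * bellPoly (m+1) y := by
          rw [hA]
      _ = ∑ k ∈ Finset.range (n+1),
            ((∑ m ∈ Finset.range (l+1), (l.choose m : ℝ) * stirling2 n k * (k:ℝ)^(l+1-m) * y^k * bellPoly m y)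
            + stirling2 n k * y^k *
              ∑ m ∈ Finset.range (l+1), (l.choose m : ℝ) * (k:ℝ)^(l-m) * bellPoly (m+1) y) := by
          rw [Finset.sum_add_distrib]
      _ = ∑ k ∈ Finset.range (n+1), ∑ m ∈ Finset.range (l+1+1),
            ((l+1).choose m : ℝ) * stirling2 n k * (k:ℝ)^(l+1-m) * y^k * bellPoly m y := by
          exact (Finset.sum_congr rfl hR).symm
end
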